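/- arXiv:1409.6326 — 2 statements merged into one kernel-verified Lean document; each statement's English description precedes it below -/
import Mathlib

section
/- Let Γ be an infinite, connected, locally finite weighted graph and X ⊂ Γ a finite subset. Then every function f : X → ℝ extends to a harmonic function on all of Γ if and only if there is no non-zero finitely supported function on Γ that is harmonic on Γ∖X. -/
/-- A weighted graph: undirected, loopless, locally finite, with symmetric
positive edge weights. -/
structure WGraph (V : Type*) where
  Adj : V → V → Prop
  symm : ∀ {x y}, Adj x y → Adj y x
  loopless : ∀ x, ¬ Adj x x
  w : V → V → ℝ
  w_symm : ∀ x y, w x y = w y x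
  w_pos : ∀ {x y}, Adj x y → 0 < w x y
  locFin : ∀ x, {y | Adj x y}.Finite

namespace WGraph

variable {V : Type*} (G : WGraph V)

/-- The (weighted) degree of a vertex. -/
noncomputable def deg (x : V) : ℝ := ∑ᶠ y ∈ {y | G.Adj x y}, G.w x y

/-- The Laplacian `Δf(x) = f(x) - (1/deg x) ∑_{y∼x} ω_{xy} f(y)`. -/
noncomputable def lap (f : V → ℝ) (x : V) : ℝ :=
  f x - (1 / G.deg x) * ∑ᶠ y ∈ {y | G.Adj x y}, G.w x y * f y

/-- `f` is harmonic on `G`. -/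
def Harmonic (f : V → ℝ) : Prop := ∀ x, G.lap f x = 0

end WGraph

namespace WGraph

variable {V : Type*} (G : WGraph V)

noncomputable def nbr (x : V) : Finset V := (G.locFin x).toFinset

lemma mem_nbr {x y : V} : y ∈ G.nbr x ↔ G.Adj x y := Set.Finite.mem_toFinset _

lemma deg_eq (x : V) : G.deg x = ∑ y ∈ G.nbr x, G.w x y := by
  rw [deg, show {y | G.Adj x y} = ↑(G.nbr x) from (G.locFin x).coe_toFinset.symm,
    finsum_mem_coe_finset]

lemma lap_eq (f : V → ℝ) (x : V) :
    G.lap f x = f x - (1 / G.deg x) * ∑ y ∈ G.nbr x, G.w x y * f y := by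
  rw [lap, show {y | G.Adj x y} = ↑(G.nbr x) from (G.locFin x).coe_toFinset.symm,
    finsum_mem_coe_finset]

/-- `deg x * lap f x`, in Finset form. -/
noncomputable def dl (f : V → ℝ) (x : V) : ℝ :=
  G.deg x * f x - ∑ y ∈ G.nbr x, G.w x y * f y
lemma nbr_nonempty [Infinite V] (hconn : ∀ x y : V, Relation.ReflTransGen G.Adj x y)
    (x : V) : (G.nbr x).Nonempty := by
  obtain ⟨y, hy⟩ := exists_ne x
  rcases (hconn x y).cases_head with h | ⟨c, hc, -⟩
  · exact absurd h.symm hy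
  · exact ⟨c, G.mem_nbr.mpr hc⟩

lemma deg_pos [Infinite V] (hconn : ∀ x y : V, Relation.ReflTransGen G.Adj x y)
    (x : V) : 0 < G.deg x := by
  rw [deg_eq]
  exact Finset.sum_pos (fun y hy => G.w_pos (G.mem_nbr.mp hy)) (G.nbr_nonempty hconn x)

lemma dl_eq (hd : ∀ x, 0 < G.deg x) (f : V → ℝ) (x : V) :
    G.dl f x = G.deg x * G.lap f x := by
  rw [lap_eq, dl, mul_sub]
  congr 1
  rw [← mul_assoc, mul_one_div, div_self (hd x).ne', one_mul]

lemma lap_eq_zero_iff (hd : ∀ x, 0 < G.deg x) (f : V → ℝ) (x : V) :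
    G.lap f x = 0 ↔ G.dl f x = 0 := by
  rw [dl_eq G hd, mul_eq_zero]
  constructor
  · exact Or.inr
  · rintro (h | h)
    · exact absurd h (hd x).ne'
    · exact h

lemma dl_add (f g : V → ℝ) (x : V) : G.dl (f + g) x = G.dl f x + G.dl g x := by
  simp only [dl, Pi.add_apply, mul_add, Finset.sum_add_distrib]
  ring

lemma dl_smul (a : ℝ) (f : V → ℝ) (x : V) : G.dl (a • f) x = a * G.dl f x := by
  simp only [dl, Pi.smul_apply, smul_eq_mul, mul_sub, Finset.mul_sum]
  congr 1
  · ring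
  apply Finset.sum_congr rfl
  intro y _
  ring

lemma dl_neg (f : V → ℝ) (x : V) : G.dl (-f) x = - G.dl f x := by
  have := G.dl_smul (-1) f x
  simpa using this

/-- Green's identity over a sufficiently large finset. -/
lemma green (f h : V → ℝ) (S : Finset V)
    (h1 : ∀ x, f x ≠ 0 → x ∈ S)
    (h2 : ∀ x, f x ≠ 0 → ∀ y, G.Adj x y → y ∈ S) :
    ∑ x ∈ S, G.dl f x * h x = ∑ x ∈ S, f x * G.dl h x := by
  classical
  simp only [dl, sub_mul, mul_sub, Finset.sum_sub_distrib, Finset.sum_mul, Finset.mul_sum]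
  congr 1
  · apply Finset.sum_congr rfl; intro x _; ring
  have L : ∀ x ∈ S, (∑ y ∈ G.nbr x, G.w x y * f y * h x)
      = ∑ y ∈ S, if G.Adj x y then G.w x y * f y * h x else 0 := by
    intro x _
    rw [show (∑ y ∈ S, if G.Adj x y then G.w x y * f y * h x else 0)
        = ∑ y ∈ S ∩ G.nbr x, G.w x y * f y * h x by
      rw [← Finset.sum_ite_mem]
      apply Finset.sum_congr rfl
      intro y _
      simp [G.mem_nbr]]
    apply (Finset.sum_subset Finset.inter_subset_right ?_).symm
    intro y hy hy'
    have : f y = 0 := by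
      by_contra hfy
      exact hy' (Finset.mem_inter.mpr ⟨h1 y hfy, hy⟩)
    simp [this]
  have R : ∀ x ∈ S, (∑ y ∈ G.nbr x, f x * (G.w x y * h y))
      = ∑ y ∈ S, if G.Adj x y then G.w x y * f x * h y else 0 := by
    intro x _
    by_cases hfx : f x = 0
    · simp only [hfx, zero_mul, Finset.sum_const_zero]
      symm; apply Finset.sum_eq_zero
      intro y _
      split <;> simp [hfx]
    · rw [show (∑ y ∈ S, if G.Adj x y then G.w x y * f x * h y else 0)
          = ∑ y ∈ S ∩ G.nbr x, G.w x y * f x * h y by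
        rw [← Finset.sum_ite_mem]
        apply Finset.sum_congr rfl
        intro y _
        simp [G.mem_nbr]]
      rw [Finset.inter_eq_right.mpr (fun y hy => h2 x hfx y (G.mem_nbr.mp hy))]
      apply Finset.sum_congr rfl
      intro y _
      ring
  rw [Finset.sum_congr rfl L, Finset.sum_congr rfl R, Finset.sum_comm]
  apply Finset.sum_congr rfl; intro x _
  apply Finset.sum_congr rfl; intro y _
  have : G.Adj x y ↔ G.Adj y x := ⟨G.symm, G.symm⟩
  by_cases hxy : G.Adj x y
  · rw [if_pos hxy, if_pos (G.symm hxy), G.w_symm x y]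
  · rw [if_neg hxy, if_neg (fun hc => hxy (G.symm hc))]

lemma dl_eq_zero_outside (f : V → ℝ) (S : Finset V)
    (h1 : ∀ x, f x ≠ 0 → x ∈ S)
    (h2 : ∀ x, f x ≠ 0 → ∀ y, G.Adj x y → y ∈ S)
    {x : V} (hx : x ∉ S) : G.dl f x = 0 := by
  have hfx : f x = 0 := by
    by_contra h; exact hx (h1 x h)
  rw [dl, hfx, mul_zero, zero_sub, neg_eq_zero]
  apply Finset.sum_eq_zero
  intro y hy
  have : f y = 0 := by
    by_contra h
    exact hx (h2 y h x (G.symm (G.mem_nbr.mp hy)))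
  simp [this]

lemma harmonic_dl (hd : ∀ x, 0 < G.deg x) {f : V → ℝ} (hf : G.Harmonic f) (x : V) :
    G.dl f x = 0 := (G.lap_eq_zero_iff hd f x).mp (hf x)

lemma le_zero_of_harmonic [Infinite V]
    (hconn : ∀ x y : V, Relation.ReflTransGen G.Adj x y)
    (f : V → ℝ) (hfin : (Function.support f).Finite) (hf : G.Harmonic f) (x : V) :
    f x ≤ 0 := by
  classical
  have hd := G.deg_pos hconn
  obtain ⟨z, hz⟩ : ∃ z, f z = 0 := by
    obtain ⟨z, hz⟩ := (hfin.infinite_compl).nonempty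
    exact ⟨z, Function.notMem_support.mp hz⟩
  set T : Finset V := insert z hfin.toFinset with hT
  obtain ⟨m, hmT, hm⟩ := T.exists_max_image f ⟨z, Finset.mem_insert_self _ _⟩
  set M := f m with hM
  have hbound : ∀ y, f y ≤ M := by
    intro y
    by_cases hy : y ∈ T
    · exact hm y hy
    · have : f y = 0 := by
        by_contra h
        exact hy (Finset.mem_insert_of_mem (hfin.mem_toFinset.mpr h))
      rw [this]
      calc (0:ℝ) = f z := hz.symm
      _ ≤ M := hm z (Finset.mem_insert_self _ _)
  by_contra hpos
  push_neg at hpos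
  have hMpos : 0 < M := lt_of_lt_of_le hpos (hbound x)
  have step : ∀ a, f a = M → ∀ b, G.Adj a b → f b = M := by
    intro a ha b hab
    have hdla := G.harmonic_dl hd hf a
    rw [dl, ha] at hdla
    have hsum : ∑ y ∈ G.nbr a, G.w a y * (M - f y) = 0 := by
      simp only [mul_sub, Finset.sum_sub_distrib]
      rw [← Finset.sum_mul, ← G.deg_eq]
      rw [sub_eq_zero] at hdla ⊢
      exact hdla
    have hterm := (Finset.sum_eq_zero_iff_of_nonneg ?_).mp hsum b (G.mem_nbr.mpr hab)
    · have hw := G.w_pos hab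
      have : M - f b = 0 := by
        rcases mul_eq_zero.mp hterm with h | h
        · exact absurd h hw.ne'
        · exact h
      linarith
    · intro y hy
      have := G.w_pos (G.mem_nbr.mp hy)
      have := hbound y
      nlinarith
  have hfm : ∀ b, Relation.ReflTransGen G.Adj m b → f b = M := by
    intro b hb
    induction hb with
    | refl => rfl
    | tail _ hadj ih => exact step _ ih _ hadj
  have := hfm z (hconn m z)
  rw [hz] at this
  exact absurd this.symm hMpos.ne'

lemma eq_zero_of_harmonic [Infinite V]
    (hconn : ∀ x y : V, Relation.ReflTransGen G.Adj x y)
    (f : V → ℝ) (hfin : (Function.support f).Finite) (hf : G.Harmonic f) : f = 0 := by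
  have hd := G.deg_pos hconn
  have hneg : G.Harmonic (-f) := by
    intro x
    rw [G.lap_eq_zero_iff hd, G.dl_neg, neg_eq_zero]
    exact G.harmonic_dl hd hf x
  funext x
  have h1 := G.le_zero_of_harmonic hconn f hfin hf x
  have h2 := G.le_zero_of_harmonic hconn (-f) (by simpa using hfin) hneg x
  simp only [Pi.neg_apply, neg_nonpos] at h2
  simp only [Pi.zero_apply]
  linarith

open Classical in
/-- The canonical "big" finset for a finitely supported function: its support
together with all neighbours of the support. -/
noncomputable def bigS (G : WGraph V) {f : V → ℝ} (hf : (Function.support f).Finite) : Finset V :=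
  hf.toFinset ∪ hf.toFinset.biUnion G.nbr

open Classical in
lemma bigS_h1 {f : V → ℝ} (hf : (Function.support f).Finite) :
    ∀ x, f x ≠ 0 → x ∈ G.bigS hf :=
  fun x hx => Finset.mem_union_left _ (hf.mem_toFinset.mpr hx)

open Classical in
lemma bigS_h2 {f : V → ℝ} (hf : (Function.support f).Finite) :
    ∀ x, f x ≠ 0 → ∀ y, G.Adj x y → y ∈ G.bigS hf := by
  intro x hx y hxy
  exact Finset.mem_union_right _
    (Finset.mem_biUnion.mpr ⟨x, hf.mem_toFinset.mpr hx, G.mem_nbr.mpr hxy⟩)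

open Classical in
lemma dl_support_finite {f : V → ℝ} (hf : (Function.support f).Finite) :
    (Function.support (G.dl f)).Finite := by
  apply Set.Finite.subset (G.bigS hf).finite_toSet
  intro x hx
  by_contra hxS
  exact hx (G.dl_eq_zero_outside f (G.bigS hf) (G.bigS_h1 hf) (G.bigS_h2 hf) hxS)

/-- The map `f ↦ deg · lap f` on finitely supported functions, as a linear map. -/
noncomputable def Dmap : (V →₀ ℝ) →ₗ[ℝ] (V →₀ ℝ) where
  toFun f := Finsupp.ofSupportFinite (G.dl f) (G.dl_support_finite f.finite_support)
  map_add' f g := by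
    ext x
    simp only [Finsupp.ofSupportFinite_coe, Finsupp.coe_add, Pi.add_apply]
    exact G.dl_add _ _ x
  map_smul' a f := by
    ext x
    simp only [Finsupp.ofSupportFinite_coe, Finsupp.coe_smul, Pi.smul_apply,
      RingHom.id_apply, smul_eq_mul]
    exact G.dl_smul a _ x

lemma Dmap_apply (f : V →₀ ℝ) (x : V) : G.Dmap f x = G.dl f x := by
  simp [Dmap, Finsupp.ofSupportFinite]
  rfl

end WGraph


/-- Duality result for harmonic functions: on an infinite, connected, locally
finite weighted graph, every function on a finite set `X` extends to a harmonic
function if and only if there is no non-zero finitely supported function that is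
harmonic off `X`. -/
theorem duality_harmonic_extension {V : Type*} [Infinite V] (G : WGraph V)
    (hconn : ∀ x y : V, Relation.ReflTransGen G.Adj x y)
    (X : Set V) (hX : X.Finite) :
    (∀ f₀ : V → ℝ, ∃ h : V → ℝ, G.Harmonic h ∧ ∀ x ∈ X, h x = f₀ x) ↔
      ¬ ∃ f : V → ℝ, f ≠ 0 ∧ (Function.support f).Finite ∧
        ∀ x ∉ X, G.lap f x = 0 := by
  classical
  have hd := G.deg_pos hconn
  constructor
  · rintro hext ⟨f, hf0, hfin, hfX⟩
    obtain ⟨h, hh, hhX⟩ := hext (G.lap f)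
    set S : Finset V := G.bigS hfin ∪ hX.toFinset with hS
    have h1 : ∀ x, f x ≠ 0 → x ∈ S := fun x hx => Finset.mem_union_left _ (G.bigS_h1 hfin x hx)
    have h2 : ∀ x, f x ≠ 0 → ∀ y, G.Adj x y → y ∈ S :=
      fun x hx y hxy => Finset.mem_union_left _ (G.bigS_h2 hfin x hx y hxy)
    have hg := G.green f h S h1 h2
    have hrhs : ∑ x ∈ S, f x * G.dl h x = 0 := by
      apply Finset.sum_eq_zero
      intro x _
      rw [G.harmonic_dl hd hh x, mul_zero]
    rw [hrhs] at hg
    -- each term of the LHS is nonnegative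
    have hterm : ∀ x ∈ S, G.dl f x * h x = if x ∈ X then G.deg x * (G.lap f x)^2 else 0 := by
      intro x _
      by_cases hx : x ∈ X
      · rw [if_pos hx, hhX x hx, G.dl_eq hd]
        ring
      · rw [if_neg hx, G.dl_eq hd, hfX x hx, mul_zero, zero_mul]
    rw [Finset.sum_congr rfl hterm] at hg
    have hzero : ∀ x ∈ S, (if x ∈ X then G.deg x * (G.lap f x)^2 else 0) = 0 := by
      apply (Finset.sum_eq_zero_iff_of_nonneg ?_).mp hg
      intro x _
      split
      · have := hd x
        positivity
      · exact le_rfl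
    have hharm : G.Harmonic f := by
      intro x
      by_cases hx : x ∈ X
      · by_cases hxS : x ∈ S
        · have := hzero x hxS
          rw [if_pos hx] at this
          rcases mul_eq_zero.mp this with h' | h'
          · exact absurd h' (hd x).ne'
          · exact pow_eq_zero_iff two_ne_zero |>.mp h'
        · have := G.dl_eq_zero_outside f S h1 h2 hxS
          exact (G.lap_eq_zero_iff hd f x).mpr this
      · exact hfX x hx
    exact hf0 (G.eq_zero_of_harmonic hconn f hfin hharm)
  · intro hno
    by_contra hne
    push_neg at hne
    obtain ⟨f₀, hf₀⟩ := hne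
    set Xf : Finset V := hX.toFinset with hXf
    -- the restriction map to functions on X
    let R : (V → ℝ) →ₗ[ℝ] ({x // x ∈ Xf} → ℝ) := LinearMap.funLeft ℝ ℝ (fun i => (i : V))
    -- the submodule of harmonic functions
    let Hsub : Submodule ℝ (V → ℝ) :=
      { carrier := {h | G.Harmonic h}
        add_mem' := by
          intro a b ha hb x
          rw [G.lap_eq_zero_iff hd, G.dl_add,
            (G.lap_eq_zero_iff hd a x).mp (ha x), (G.lap_eq_zero_iff hd b x).mp (hb x), add_zero]
        zero_mem' := by
          intro x
          rw [G.lap_eq_zero_iff hd]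
          simp [WGraph.dl]
        smul_mem' := by
          intro a g hg x
          rw [G.lap_eq_zero_iff hd, G.dl_smul, (G.lap_eq_zero_iff hd g x).mp (hg x), mul_zero] }
    let W : Submodule ℝ ({x // x ∈ Xf} → ℝ) := Hsub.map R
    have hW : W ≠ ⊤ := by
      intro hW
      have hmem : R f₀ ∈ W := hW ▸ Submodule.mem_top
      obtain ⟨g, hg, hRg⟩ := hmem
      obtain ⟨x, hxX, hne⟩ := hf₀ g hg
      have hxf : x ∈ Xf := hX.mem_toFinset.mpr hxX
      have := congrFun hRg ⟨x, hxf⟩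
      exact hne this
    -- a nonzero functional vanishing on W
    obtain ⟨v, hvW⟩ : ∃ v, v ∉ W := by
      by_contra hcon
      push_neg at hcon
      exact hW (Submodule.eq_top_iff'.mpr hcon)
    have hv0 : W.mkQ v ≠ 0 := by
      rw [Ne, Submodule.mkQ_apply, Submodule.Quotient.mk_eq_zero]
      exact hvW
    obtain ⟨φ', hφ'⟩ : ∃ φ' : Module.Dual ℝ (({x // x ∈ Xf} → ℝ) ⧸ W), φ' (W.mkQ v) ≠ 0 := by
      by_contra hcon
      push_neg at hcon
      exact hv0 ((Module.forall_dual_apply_eq_zero_iff ℝ _).mp hcon)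
    set φ : Module.Dual ℝ ({x // x ∈ Xf} → ℝ) := φ'.comp W.mkQ with hφdef
    have hφW : ∀ g ∈ W, φ g = 0 := by
      intro g hg
      have : W.mkQ g = 0 := by
        rw [Submodule.mkQ_apply, Submodule.Quotient.mk_eq_zero]
        exact hg
      simp only [hφdef, LinearMap.comp_apply, this, map_zero]
    -- basis-type vectors
    let e : {x // x ∈ Xf} → ({x // x ∈ Xf} → ℝ) := fun i j => if i = j then 1 else 0
    have hφexp : ∀ g : {x // x ∈ Xf} → ℝ, φ g = ∑ i, g i * φ (e i) := by
      intro g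
      conv_lhs => rw [pi_eq_sum_univ g]
      rw [map_sum]
      apply Finset.sum_congr rfl
      intro i _
      rw [map_smul, smul_eq_mul]
    -- the coefficient function
    set c : V → ℝ := fun x => if hx : x ∈ Xf then φ (e ⟨x, hx⟩) else 0 with hc
    have hcsupp : ∀ x, c x ≠ 0 → x ∈ Xf := by
      intro x hx
      by_contra h
      rw [hc] at hx
      simp only [dif_neg h] at hx
      exact hx rfl
    have hcfin : (Function.support c).Finite :=
      Set.Finite.subset Xf.finite_toSet (fun x hx => hcsupp x hx)
    have hcne : ∃ x, c x ≠ 0 := by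
      by_contra hcz
      push_neg at hcz
      apply hφ'
      have : φ v = 0 := by
        rw [hφexp]
        apply Finset.sum_eq_zero
        intro i _
        have := hcz (i : V)
        rw [hc] at this
        simp only [dif_pos i.2] at this
        have hei : e ⟨(i:V), i.2⟩ = e i := by congr
        rw [hei] at this
        rw [this, mul_zero]
      rwa [hφdef, LinearMap.comp_apply] at this
    -- key: the coefficients annihilate every harmonic function
    have keyA : ∀ g : V → ℝ, G.Harmonic g → ∑ x ∈ Xf, c x * g x = 0 := by
      intro g hg
      have hRg : R g ∈ W := Submodule.mem_map_of_mem hg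
      have h0 : φ (R g) = 0 := hφW _ hRg
      rw [hφexp] at h0
      rw [← Finset.sum_coe_sort Xf (fun x => c x * g x)]
      rw [← h0]
      apply Finset.sum_congr rfl
      intro i _
      have : c (i : V) = φ (e i) := by
        rw [hc]
        simp only [dif_pos i.2]
      rw [this]
      ring_nf
      rfl
    -- c as a finitely supported function
    set c₀ : V →₀ ℝ := Finsupp.ofSupportFinite c hcfin with hc₀
    have hc₀app : ∀ x, c₀ x = c x := fun x => congrFun Finsupp.ofSupportFinite_coe x
    -- c₀ lies in the range of Dmap
    have hrange : c₀ ∈ LinearMap.range G.Dmap := by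
      by_contra hc₀r
      set U := LinearMap.range G.Dmap with hU
      have hq0 : U.mkQ c₀ ≠ 0 := by
        rw [Ne, Submodule.mkQ_apply, Submodule.Quotient.mk_eq_zero]
        exact hc₀r
      obtain ⟨ψ', hψ'⟩ : ∃ ψ' : Module.Dual ℝ ((V →₀ ℝ) ⧸ U), ψ' (U.mkQ c₀) ≠ 0 := by
        by_contra hcon
        push_neg at hcon
        exact hq0 ((Module.forall_dual_apply_eq_zero_iff ℝ _).mp hcon)
      set ψ : Module.Dual ℝ (V →₀ ℝ) := ψ'.comp U.mkQ with hψdef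
      have hψU : ∀ f : V →₀ ℝ, ψ (G.Dmap f) = 0 := by
        intro f
        have : U.mkQ (G.Dmap f) = 0 := by
          rw [Submodule.mkQ_apply, Submodule.Quotient.mk_eq_zero]
          exact LinearMap.mem_range_self _ f
        simp only [hψdef, LinearMap.comp_apply, this, map_zero]
      set h : V → ℝ := fun x => ψ (Finsupp.single x 1) with hhdef
      have hψsum : ∀ f : V →₀ ℝ, ψ f = ∑ x ∈ f.support, f x * h x := by
        intro f
        have : ψ = Finsupp.linearCombination ℝ h := by
          apply Finsupp.lhom_ext
          intro a b
          have hs : Finsupp.single a b = b • Finsupp.single a (1:ℝ) := by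
            rw [Finsupp.smul_single, smul_eq_mul, mul_one]
          rw [Finsupp.linearCombination_single, hs, map_smul, smul_eq_mul]
        rw [this, Finsupp.linearCombination_apply, Finsupp.sum]
        apply Finset.sum_congr rfl
        intro x _
        rw [smul_eq_mul]
      -- h is harmonic
      have hharm : G.Harmonic h := by
        intro y
        rw [G.lap_eq_zero_iff hd]
        set fy : V →₀ ℝ := Finsupp.single y 1 with hfy
        have hfyfin := fy.finite_support
        set S : Finset V := G.bigS hfyfin with hSdef
        have h0 : ψ (G.Dmap fy) = 0 := hψU fy
        rw [hψsum] at h0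
        have hsub : (G.Dmap fy).support ⊆ S := by
          intro x hxs
          have hne := Finsupp.mem_support_iff.mp hxs
          rw [G.Dmap_apply] at hne
          by_contra hxS
          exact hne (G.dl_eq_zero_outside _ S (G.bigS_h1 hfyfin) (G.bigS_h2 hfyfin) hxS)
        have hsum : ∑ x ∈ S, G.dl (⇑fy) x * h x = 0 := by
          calc ∑ x ∈ S, G.dl (⇑fy) x * h x
              = ∑ x ∈ (G.Dmap fy).support, G.dl (⇑fy) x * h x := by
                symm
                apply Finset.sum_subset hsub
                intro x _ hxns
                have h2' := Finsupp.notMem_support_iff.mp hxns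
                rw [G.Dmap_apply] at h2'
                rw [h2', zero_mul]
            _ = ∑ x ∈ (G.Dmap fy).support, (G.Dmap fy) x * h x :=
                Finset.sum_congr rfl (fun x _ => by rw [G.Dmap_apply])
            _ = 0 := h0
        · rw [Finset.sum_congr rfl (fun x _ => rfl)] at hsum
          rw [G.green _ h S (G.bigS_h1 hfyfin) (G.bigS_h2 hfyfin)] at hsum
          have hyS : y ∈ S := G.bigS_h1 hfyfin y (by simp [hfy])
          rw [Finset.sum_eq_single y (fun x _ hxy => by
              simp [hfy, Finsupp.single_apply, Ne.symm hxy])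
            (fun hys => absurd hyS hys)] at hsum
          simpa [hfy] using hsum
      -- contradiction with keyA
      have hψc₀ : ψ c₀ = ∑ x ∈ Xf, c x * h x := by
        rw [hψsum]
        calc ∑ x ∈ c₀.support, c₀ x * h x
            = ∑ x ∈ c₀.support, c x * h x :=
              Finset.sum_congr rfl (fun x _ => by rw [hc₀app])
          _ = ∑ x ∈ Xf, c x * h x := by
              apply Finset.sum_subset
              · intro x hxs
                exact hcsupp x (by rw [← hc₀app x]; exact Finsupp.mem_support_iff.mp hxs)
              · intro x _ hxns
                have hz : c₀ x = 0 := Finsupp.notMem_support_iff.mp hxns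
                rw [hc₀app] at hz
                rw [hz, zero_mul]
      have := keyA h hharm
      rw [← hψc₀] at this
      rw [hψdef, LinearMap.comp_apply] at this
      exact hψ' this
    -- extract the finitely supported function and contradict `hno`
    obtain ⟨f, hf⟩ := hrange
    apply hno
    refine ⟨⇑f, ?_, f.finite_support, ?_⟩
    · intro hf0
      obtain ⟨x, hx⟩ := hcne
      apply hx
      have hfz : f = 0 := Finsupp.coe_eq_zero.mp hf0
      rw [← hc₀app x, ← hf, hfz, map_zero]
      rfl
    · intro x hx
      rw [G.lap_eq_zero_iff hd]
      have h1' : G.Dmap f x = c₀ x := by rw [hf]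
      rw [G.Dmap_apply, hc₀app] at h1'
      rw [h1', hc]
      have : x ∉ Xf := fun hc' => hx (hX.mem_toFinset.mp hc')
      simp only [dif_neg this]
end

section
/- Let Γ be a locally finite vertex-transitive weighted graph and let x, y be vertices. Then for each n, the probability starting at x that the first hitting time of y equals n equals the probability starting at y that the first hitting time of x equals n. In particular P_x[T_y < ∞] = P_y[T_x < ∞]. -/
open Classical

namespace WGraph

variable {V : Type*} (G : WGraph V)

/-- A permutation of the vertices is an automorphism of the weighted graph if it
preserves adjacency and weights. -/
def IsAut (g : Equiv.Perm V) : Prop :=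
  ∀ x y : V, (G.Adj x y ↔ G.Adj (g x) (g y)) ∧ G.w (g x) (g y) = G.w x y

/-- The graph is vertex-transitive: automorphisms act transitively on vertices. -/
def VertexTransitive : Prop :=
  ∀ x y : V, ∃ g : Equiv.Perm V, G.IsAut g ∧ g x = y

/-- One-step transition probability of the random walk: `ω_{xy} / deg x`. -/
noncomputable def step (x y : V) : ℝ :=
  if G.Adj x y then G.w x y / G.deg x else 0

/-- The probability that the random walk follows the trajectory
`f 0, f 1, …, f n` (conditioned on starting at `f 0`). -/
noncomputable def trajProb {n : ℕ} (f : Fin (n + 1) → V) : ℝ :=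
  ∏ i : Fin n, G.step (f i.castSucc) (f i.succ)

/-- `P_x[T_y = n]`: the probability that the walk started at `x` first hits `y`
at time exactly `n`. -/
noncomputable def firstHitProb (x y : V) (n : ℕ) : ℝ :=
  ∑ᶠ f : Fin (n + 1) → V,
    if f 0 = x ∧ f (Fin.last n) = y ∧ (∀ i : Fin (n + 1), i ≠ Fin.last n → f i ≠ y)
    then G.trajProb f else 0

/-- `P_x[T_y < ∞]`: the probability that the walk started at `x` ever hits `y`. -/
noncomputable def hitProb (x y : V) : ℝ := ∑' n : ℕ, G.firstHitProb x y n

/-- The probability that the walk started at `e` first returns to `e` at time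
exactly `m`. -/
noncomputable def firstReturnProb (e : V) (m : ℕ) : ℝ :=
  ∑ᶠ f : Fin (m + 1) → V,
    if f 0 = e ∧ f (Fin.last m) = e ∧
        (∀ i : Fin (m + 1), i ≠ 0 → i ≠ Fin.last m → f i ≠ e)
    then G.trajProb f else 0

/-- The random walk is transient at `e`: the return probability is `< 1`. -/
noncomputable def Transient (e : V) : Prop :=
  ∑' n : ℕ, G.firstReturnProb e (n + 1) < 1

end WGraph

/- ------------------------------------------------------------------ -/
/- Auxiliary development                                               -/
/- ------------------------------------------------------------------ -/

section AuxFinsum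

/-- Change of variables along an injection outside whose range the function
vanishes. -/
lemma aux_finsum_comp_inj {α β : Type*} (e : α → β) (he : Function.Injective e)
    (F : β → ℝ) (h0 : ∀ b, b ∉ Set.range e → F b = 0) :
    ∑ᶠ b, F b = ∑ᶠ a, F (e a) := by
  rw [← finsum_mem_univ F,
    finsum_mem_inter_support_eq F Set.univ (Set.range e) ?_, finsum_mem_range he]
  ext b
  simp only [Set.mem_inter_iff, Set.mem_univ, true_and, Function.mem_support]
  exact ⟨fun hb => ⟨by by_contra h; exact hb (h0 b h), hb⟩, fun h => h.2⟩

/-- Grouping a finite-support sum according to the fibers of a map. -/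
lemma aux_finsum_fiber {α β : Type*} (φ : β → α) (h : β → ℝ)
    (hfin : (Function.support h).Finite) :
    ∑ᶠ b, h b = ∑ᶠ a, ∑ᶠ b, if φ b = a then h b else 0 := by
  classical
  set s : Finset β := hfin.toFinset with hs
  have hsupp : ∀ a : α,
      Function.support (fun b => if φ b = a then h b else 0) ⊆ (s : Set β) := by
    intro a b hb
    simp only [Function.mem_support] at hb
    have hhb : h b ≠ 0 := by
      intro h0; apply hb; simp [h0]
    simp [hs, hhb]
  have houter : Function.support (fun a : α => ∑ᶠ b, if φ b = a then h b else 0)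
      ⊆ ((s.image φ : Finset α) : Set α) := by
    intro a ha
    simp only [Function.mem_support] at ha
    by_contra hna
    apply ha
    apply finsum_eq_zero_of_forall_eq_zero
    intro b
    by_cases hb : φ b = a
    · subst hb
      by_cases h0 : h b = 0
      · simp [h0]
      · exact ((hna (Finset.mem_coe.2
          (Finset.mem_image_of_mem φ (hfin.mem_toFinset.2 h0)))).elim)
    · simp [hb]
  rw [finsum_eq_finset_sum_of_support_subset _ houter]
  have hinner : ∀ a : α, (∑ᶠ b, if φ b = a then h b else 0)
      = ∑ b ∈ s, if φ b = a then h b else 0 :=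
    fun a => finsum_eq_finset_sum_of_support_subset _ (hsupp a)
  rw [Finset.sum_congr rfl fun a _ => hinner a, Finset.sum_comm,
    finsum_eq_finset_sum_of_support_subset h
      (fun b hb => Finset.mem_coe.2 (hfin.mem_toFinset.2 hb))]
  refine Finset.sum_congr rfl fun b hb => ?_
  rw [Finset.sum_ite_eq (s.image φ) (φ b) fun _ => h b,
    if_pos (Finset.mem_image_of_mem φ hb)]

lemma aux_ite_congr {b c : Prop} {x y : ℝ} {db : Decidable b} {dc : Decidable c}
    (h : b ↔ c) : (@ite ℝ b db x y) = @ite ℝ c dc x y := by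
  by_cases hb : b
  · rw [if_pos hb, if_pos (h.mp hb)]
  · rw [if_neg hb, if_neg fun hc => hb (h.mpr hc)]

end AuxFinsum

namespace WGraph

variable {V : Type*} (G : WGraph V)

/-- The set of length-`n` edge-trajectories starting at `x`. -/
def pathSet (n : ℕ) (x : V) : Set (Fin (n + 1) → V) :=
  {f | f 0 = x ∧ ∀ i : Fin n, G.Adj (f i.castSucc) (f i.succ)}

lemma pathSet_finite : ∀ n : ℕ, ∀ x : V, (G.pathSet n x).Finite := by
  intro n
  induction n with
  | zero =>
    intro x
    apply Set.Finite.subset (Set.finite_singleton fun _ : Fin 1 => x)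
    intro f hf
    have hfx : f = fun _ => x := by
      funext i
      have h0 : i = 0 := Subsingleton.elim _ _
      rw [h0]; exact hf.1
    simp [hfx]
  | succ n ih =>
    intro x
    have hsub : G.pathSet (n + 1) x ⊆
        ⋃ g ∈ G.pathSet n x, (fun z => Fin.snoc g z) '' {z | G.Adj (g (Fin.last n)) z} := by
      intro f hf
      have hinit : Fin.init f ∈ G.pathSet n x := by
        constructor
        · show f (Fin.castSucc 0) = x
          simpa using hf.1
        · intro i
          have h2 := hf.2 i.castSucc
          rw [Fin.succ_castSucc] at h2
          exact h2
      refine Set.mem_biUnion hinit ?_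
      refine ⟨f (Fin.last (n + 1)), ?_, ?_⟩
      · have h2 := hf.2 (Fin.last n)
        rw [Fin.succ_last] at h2
        exact h2
      · exact Fin.snoc_init_self f
    exact Set.Finite.subset
      (Set.Finite.biUnion (ih x) fun g _ => (G.locFin (g (Fin.last n))).image _)
      hsub

lemma trajProb_mem_pathSet {n : ℕ} {f : Fin (n + 1) → V} (h : G.trajProb f ≠ 0) :
    f ∈ G.pathSet n (f 0) := by
  refine ⟨rfl, fun i => ?_⟩
  by_contra hA
  exact h (Finset.prod_eq_zero (Finset.mem_univ i) (by simp [WGraph.step, hA]))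

lemma support_subset_pathSet {n : ℕ} {x : V} (S : (Fin (n + 1) → V) → ℝ)
    (hS : ∀ f, S f ≠ 0 → f 0 = x ∧ G.trajProb f ≠ 0) :
    Function.support S ⊆ G.pathSet n x := by
  intro f hf
  simp only [Function.mem_support] at hf
  obtain ⟨h1, h2⟩ := hS f hf
  have hmem := G.trajProb_mem_pathSet h2
  rwa [h1] at hmem

lemma support_subset_nbrPaths {n : ℕ} {x : V} (S : (Fin (n + 1) → V) → ℝ)
    (hS : ∀ f, S f ≠ 0 → G.Adj x (f 0) ∧ G.trajProb f ≠ 0) :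
    Function.support S ⊆ ⋃ z ∈ {z | G.Adj x z}, G.pathSet n z := by
  intro f hf
  simp only [Function.mem_support] at hf
  obtain ⟨h1, h2⟩ := hS f hf
  exact Set.mem_biUnion h1 (G.trajProb_mem_pathSet h2)

lemma step_ne_adj {x z : V} (h : G.step x z ≠ 0) : G.Adj x z := by
  by_contra hA; exact h (by simp [WGraph.step, hA])

lemma ite_traj_ne {C : Prop} [Decidable C] {r : ℝ}
    (h : (if C then r else 0) ≠ 0) : C ∧ r ≠ 0 := by
  by_cases hc : C
  · exact ⟨hc, by rwa [if_pos hc] at h⟩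
  · rw [if_neg hc] at h; exact (h rfl).elim

lemma nbrPaths_finite (n : ℕ) (x : V) :
    (⋃ z ∈ {z | G.Adj x z}, G.pathSet n z).Finite :=
  Set.Finite.biUnion (G.locFin x) fun z _ => G.pathSet_finite n z

/-- `P_x[X_n = y]`: the probability of being at `y` at time `n`. -/
noncomputable def hp (n : ℕ) (x y : V) : ℝ :=
  ∑ᶠ f : Fin (n + 1) → V, if f 0 = x ∧ f (Fin.last n) = y then G.trajProb f else 0

lemma hp_zero (x y : V) : G.hp 0 x y = if x = y then 1 else 0 := by
  have hzero : ∀ f : Fin 1 → V, f ≠ (fun _ => x) →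
      (if f 0 = x ∧ f (Fin.last 0) = y then G.trajProb f else 0) = 0 := by
    intro f hf
    refine if_neg fun hc => hf ?_
    funext i
    rw [Subsingleton.elim i 0, hc.1]
  have htraj : (G.trajProb fun _ : Fin 1 => x) = 1 := by rw [trajProb]; simp
  rw [hp, finsum_eq_single _ (fun _ : Fin 1 => x) hzero]
  show (if x = x ∧ x = y then G.trajProb (fun _ : Fin 1 => x) else 0)
    = if x = y then 1 else 0
  rw [htraj]
  by_cases hxy : x = y
  · rw [if_pos ⟨rfl, hxy⟩, if_pos hxy]
  · rw [if_neg fun hc => hxy hc.2, if_neg hxy]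

lemma fh_zero (x y : V) : G.firstHitProb x y 0 = if x = y then 1 else 0 := by
  have hzero : ∀ f : Fin 1 → V, f ≠ (fun _ => x) →
      (if f 0 = x ∧ f (Fin.last 0) = y ∧
        (∀ i : Fin 1, i ≠ Fin.last 0 → f i ≠ y) then G.trajProb f else 0) = 0 := by
    intro f hf
    refine if_neg fun hc => hf ?_
    funext i
    rw [Subsingleton.elim i 0, hc.1]
  have htraj : (G.trajProb fun _ : Fin 1 => x) = 1 := by rw [trajProb]; simp
  rw [firstHitProb, finsum_eq_single _ (fun _ : Fin 1 => x) hzero]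
  show (if x = x ∧ x = y ∧
      (∀ i : Fin 1, i ≠ Fin.last 0 → (fun _ : Fin 1 => x) i ≠ y)
      then G.trajProb (fun _ : Fin 1 => x) else 0) = if x = y then 1 else 0
  rw [htraj]
  by_cases hxy : x = y
  · rw [if_pos ⟨rfl, hxy, fun i hi =>
      absurd (Subsingleton.elim i (Fin.last 0)) hi⟩, if_pos hxy]
  · rw [if_neg fun hc => hxy hc.2.1, if_neg hxy]

lemma fh_self_succ (y : V) (n : ℕ) : G.firstHitProb y y (n + 1) = 0 := by
  rw [firstHitProb]
  apply finsum_eq_zero_of_forall_eq_zero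
  intro f
  refine if_neg ?_
  rintro ⟨h0, hl, hne⟩
  exact hne 0 Fin.last_pos.ne h0

lemma trajProb_cons {n : ℕ} (z : V) (t : Fin (n + 1) → V) :
    G.trajProb (Fin.cons z t) = G.step z (t 0) * G.trajProb t := by
  rw [trajProb, trajProb, Fin.prod_univ_succ]
  congr 1

/-- Master one-step decomposition of trajectory sums. -/
lemma finsum_cons_decomp {n : ℕ} (x : V) (C : (Fin (n + 1) → V) → Prop) :
    (∑ᶠ f : Fin (n + 2) → V,
        if f 0 = x ∧ C (fun j : Fin (n + 1) => f j.succ) then G.trajProb f else 0)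
      = ∑ᶠ z : V, G.step x z *
          ∑ᶠ t : Fin (n + 1) → V, if t 0 = z ∧ C t then G.trajProb t else 0 := by
  classical
  set F : (Fin (n + 2) → V) → ℝ :=
    fun f => if f 0 = x ∧ C (fun j : Fin (n + 1) => f j.succ) then G.trajProb f else 0
      with hF
  set e : (V × (Fin (n + 1) → V)) ≃ (Fin (n + 2) → V) := Fin.consEquiv fun _ => V
    with he
  have hFe : ∀ (z : V) (t : Fin (n + 1) → V),
      F (e (z, t)) = if z = x ∧ C t then G.step x (t 0) * G.trajProb t else 0 := by
    intro z t
    have h1 : e (z, t) = Fin.cons z t := rfl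
    have h2 : (fun j : Fin (n + 1) => (Fin.cons z t : Fin (n + 2) → V) j.succ) = t := by
      funext j; simp
    rw [hF]
    simp only [h1, h2, Fin.cons_zero, G.trajProb_cons]
    by_cases hc : z = x ∧ C t
    · rw [if_pos hc, if_pos hc, hc.1]
    · rw [if_neg hc, if_neg hc]
  have hsuppF : (Function.support F).Finite := by
    refine Set.Finite.subset (G.pathSet_finite (n + 1) x)
      (G.support_subset_pathSet F fun f hf => ?_)
    rw [hF] at hf
    have := ite_traj_ne hf
    exact ⟨this.1.1, this.2⟩
  have hsuppFe : (Function.support fun p : V × (Fin (n + 1) → V) => F (e p)).Finite := by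
    have hcomp : (fun p : V × (Fin (n + 1) → V) => F (e p)) = F ∘ e := rfl
    rw [hcomp, Function.support_comp_eq_preimage]
    exact Set.Finite.preimage (e.injective.injOn) hsuppF
  have hfin1 : (Function.support fun t : Fin (n + 1) → V =>
      if C t then G.step x (t 0) * G.trajProb t else 0).Finite := by
    refine Set.Finite.subset (G.nbrPaths_finite n x)
      (G.support_subset_nbrPaths _ fun t ht => ?_)
    have h1 := (ite_traj_ne ht).2
    exact ⟨G.step_ne_adj (left_ne_zero_of_mul h1), right_ne_zero_of_mul h1⟩
  have hcomb : ∀ (z : V) (t : Fin (n + 1) → V),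
      (if t 0 = z then (if C t then G.step x (t 0) * G.trajProb t else 0) else 0)
        = G.step x z * (if t 0 = z ∧ C t then G.trajProb t else 0) := by
    intro z t
    by_cases h1 : t 0 = z
    · by_cases h2 : C t
      · rw [if_pos h1, if_pos h2, if_pos ⟨h1, h2⟩, h1]
      · rw [if_pos h1, if_neg h2, if_neg fun h => h2 h.2, mul_zero]
    · rw [if_neg h1, if_neg fun h => h1 h.1, mul_zero]
  calc (∑ᶠ f : Fin (n + 2) → V, F f)
      = ∑ᶠ p : V × (Fin (n + 1) → V), F (e p) := (finsum_comp_equiv e).symm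
    _ = ∑ᶠ (z : V) (t : Fin (n + 1) → V), F (e (z, t)) := finsum_curry _ hsuppFe
    _ = ∑ᶠ (z : V) (t : Fin (n + 1) → V),
          if z = x ∧ C t then G.step x (t 0) * G.trajProb t else 0 :=
        finsum_congr fun z => finsum_congr fun t => hFe z t
    _ = ∑ᶠ t : Fin (n + 1) → V, if C t then G.step x (t 0) * G.trajProb t else 0 := by
        rw [finsum_eq_single _ x fun z hz =>
          finsum_eq_zero_of_forall_eq_zero fun t => if_neg fun h => hz h.1]
        exact finsum_congr fun t => if_congr (and_iff_right rfl) rfl rfl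
    _ = ∑ᶠ (z : V) (t : Fin (n + 1) → V),
          if t 0 = z then (if C t then G.step x (t 0) * G.trajProb t else 0) else 0 :=
        aux_finsum_fiber (fun t : Fin (n + 1) → V => t 0) _ hfin1
    _ = ∑ᶠ z : V, G.step x z *
          ∑ᶠ t : Fin (n + 1) → V, if t 0 = z ∧ C t then G.trajProb t else 0 := by
        refine finsum_congr fun z => ?_
        rw [finsum_congr (hcomb z)]
        exact (mul_finsum _ _).symm

lemma hp_succ (n : ℕ) (x y : V) :
    G.hp (n + 1) x y = ∑ᶠ z, G.step x z * G.hp n z y := by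
  have hcond : ∀ f : Fin (n + 2) → V,
      (f 0 = x ∧ f (Fin.last (n + 1)) = y)
        ↔ (f 0 = x ∧ (fun j : Fin (n + 1) => f j.succ) (Fin.last n) = y) := by
    intro f
    simp only [Fin.succ_last]
  rw [hp, finsum_congr fun f => if_congr (hcond f) rfl rfl,
    G.finsum_cons_decomp x (fun t => t (Fin.last n) = y)]
  rfl

lemma fh_succ (n : ℕ) {x y : V} (hxy : x ≠ y) :
    G.firstHitProb x y (n + 1) = ∑ᶠ z, G.step x z * G.firstHitProb z y n := by
  have hcond : ∀ f : Fin (n + 2) → V,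
      (f 0 = x ∧ f (Fin.last (n + 1)) = y ∧
          (∀ i : Fin (n + 2), i ≠ Fin.last (n + 1) → f i ≠ y))
        ↔ (f 0 = x ∧ ((fun t : Fin (n + 1) → V =>
            t (Fin.last n) = y ∧ ∀ i : Fin (n + 1), i ≠ Fin.last n → t i ≠ y)
              (fun j : Fin (n + 1) => f j.succ))) := by
    intro f
    constructor
    · rintro ⟨h0, hl, hne⟩
      refine ⟨h0, ?_, fun i hi => ?_⟩
      · show f (Fin.last n).succ = y
        rw [Fin.succ_last]; exact hl
      · refine hne i.succ fun hc => hi ?_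
        rw [← Fin.succ_last] at hc
        exact Fin.succ_injective _ hc
    · rintro ⟨h0, hl, hne⟩
      have hl' : f (Fin.last n).succ = y := hl
      rw [Fin.succ_last] at hl'
      refine ⟨h0, hl', ?_⟩
      intro i
      refine Fin.cases (motive := fun i => i ≠ Fin.last (n + 1) → f i ≠ y) ?_ ?_ i
      · intro _; rw [h0]; exact hxy
      · intro j hj
        refine hne j fun hc => hj ?_
        rw [hc, Fin.succ_last]
  rw [firstHitProb]
  refine Eq.trans ?_ (Eq.trans (G.finsum_cons_decomp x
    (fun t => t (Fin.last n) = y ∧ ∀ i : Fin (n + 1), i ≠ Fin.last n → t i ≠ y)) ?_)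
  · exact finsum_congr fun f => aux_ite_congr (hcond f)
  · refine finsum_congr fun z => congrArg (fun r => G.step x z * r) ?_
    exact finsum_congr fun t => aux_ite_congr Iff.rfl

lemma deg_aut {g : Equiv.Perm V} (hg : G.IsAut g) (a : V) : G.deg (g a) = G.deg a := by
  rw [deg, deg]
  have himg : {y | G.Adj (g a) y} = g '' {z | G.Adj a z} := by
    ext u
    constructor
    · intro hu
      refine ⟨g.symm u, ?_, by simp⟩
      have h1 := (hg a (g.symm u)).1
      rw [Set.mem_setOf_eq, h1]
      simpa using hu
    · rintro ⟨z, hz, rfl⟩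
      exact ((hg a z).1).mp hz
  rw [himg, finsum_mem_image g.injective.injOn]
  exact finsum_mem_congr rfl fun z _ => (hg a z).2

lemma step_aut {g : Equiv.Perm V} (hg : G.IsAut g) (a b : V) :
    G.step (g a) (g b) = G.step a b := by
  have h1 := (hg a b).1
  by_cases h : G.Adj a b
  · rw [step, step, if_pos h, if_pos (h1.mp h), (hg a b).2, G.deg_aut hg]
  · rw [step, step, if_neg h, if_neg fun h' => h (h1.mpr h')]

lemma trajProb_aut {g : Equiv.Perm V} (hg : G.IsAut g) {n : ℕ} (f : Fin (n + 1) → V) :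
    G.trajProb (fun i => g (f i)) = G.trajProb f :=
  Finset.prod_congr rfl fun i _ => G.step_aut hg _ _

lemma hp_aut {g : Equiv.Perm V} (hg : G.IsAut g) (n : ℕ) (a b : V) :
    G.hp n (g a) (g b) = G.hp n a b := by
  rw [hp, hp]
  rw [← finsum_comp_equiv (Equiv.arrowCongr (Equiv.refl (Fin (n + 1))) (g : Equiv V V))
    (f := fun f : Fin (n + 1) → V =>
      if f 0 = g a ∧ f (Fin.last n) = g b then G.trajProb f else 0)]
  refine finsum_congr fun f => ?_
  have he : (Equiv.arrowCongr (Equiv.refl (Fin (n + 1))) (g : Equiv V V)) f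
      = fun i => g (f i) := by
    funext i; simp
  rw [he]
  by_cases hc : f 0 = a ∧ f (Fin.last n) = b
  · rw [if_pos (by exact ⟨congrArg g hc.1, congrArg g hc.2⟩), if_pos hc,
      G.trajProb_aut hg]
  · rw [if_neg (fun h => hc ⟨g.injective h.1, g.injective h.2⟩), if_neg hc]

lemma step_symm (hd : ∀ a b : V, G.deg a = G.deg b) (a b : V) :
    G.step a b = G.step b a := by
  by_cases h : G.Adj a b
  · rw [step, step, if_pos h, if_pos (G.symm h), G.w_symm, hd a b]
  · rw [step, step, if_neg h, if_neg fun h' => h (G.symm h')]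

lemma trajProb_rev (hd : ∀ a b : V, G.deg a = G.deg b) {n : ℕ} (f : Fin (n + 1) → V) :
    G.trajProb (fun i => f i.rev) = G.trajProb f := by
  rw [trajProb, trajProb]
  calc (∏ i : Fin n, G.step (f (Fin.rev i.castSucc)) (f (Fin.rev i.succ)))
      = ∏ i : Fin n, G.step (f (Fin.castSucc i.rev)) (f (Fin.succ i.rev)) := by
        refine Finset.prod_congr rfl fun i _ => ?_
        rw [Fin.rev_castSucc, Fin.rev_succ, G.step_symm hd]
    _ = ∏ i : Fin n, G.step (f i.castSucc) (f i.succ) :=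
        Fintype.prod_equiv Fin.revPerm
          (fun i => G.step (f (Fin.castSucc i.rev)) (f (Fin.succ i.rev)))
          (fun i => G.step (f i.castSucc) (f i.succ)) (fun i => by simp)

lemma hp_symm (hd : ∀ a b : V, G.deg a = G.deg b) (n : ℕ) (a b : V) :
    G.hp n a b = G.hp n b a := by
  rw [hp, hp]
  rw [← finsum_comp_equiv (Equiv.arrowCongr (Fin.revPerm (n := n + 1)) (Equiv.refl V))
    (f := fun f : Fin (n + 1) → V =>
      if f 0 = a ∧ f (Fin.last n) = b then G.trajProb f else 0)]
  refine finsum_congr fun f => ?_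
  have he : (Equiv.arrowCongr (Fin.revPerm (n := n + 1)) (Equiv.refl V)) f
      = fun i => f i.rev := by
    funext i; simp
  rw [he]
  have h0 : Fin.rev (0 : Fin (n + 1)) = Fin.last n := by simp
  have hl : Fin.rev (Fin.last n) = 0 := by simp
  simp only [h0, hl, G.trajProb_rev hd]
  exact if_congr and_comm rfl rfl

lemma conv (y : V) : ∀ n : ℕ, ∀ x : V,
    G.hp n x y = ∑ k ∈ Finset.range (n + 1), G.firstHitProb x y k * G.hp (n - k) y y := by
  intro n
  induction n with
  | zero =>
    intro x
    rw [Finset.sum_range_one, G.hp_zero, G.fh_zero, Nat.sub_zero, G.hp_zero,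
      if_pos rfl, mul_one]
  | succ n ih =>
    intro x
    by_cases hxy : x = y
    · subst hxy
      rw [Finset.sum_range_succ']
      have hz : ∀ k ∈ Finset.range (n + 1),
          G.firstHitProb x x (k + 1) * G.hp (n + 1 - (k + 1)) x x = 0 := by
        intro k _; rw [G.fh_self_succ, zero_mul]
      rw [Finset.sum_congr rfl hz, Finset.sum_const_zero, zero_add, G.fh_zero,
        if_pos rfl, one_mul, Nat.sub_zero]
    · have hsupp : ∀ k : ℕ, (Function.support fun z =>
          G.step x z * (G.firstHitProb z y k * G.hp (n - k) y y)).Finite := by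
        intro k
        refine (G.locFin x).subset fun z hz => ?_
        simp only [Function.mem_support] at hz
        exact G.step_ne_adj (left_ne_zero_of_mul hz)
      have hsupp2 : ∀ k : ℕ, (Function.support fun z =>
          G.step x z * G.firstHitProb z y k).Finite := by
        intro k
        refine (G.locFin x).subset fun z hz => ?_
        simp only [Function.mem_support] at hz
        exact G.step_ne_adj (left_ne_zero_of_mul hz)
      calc G.hp (n + 1) x y
          = ∑ᶠ z, G.step x z * G.hp n z y := G.hp_succ n x y
        _ = ∑ᶠ z, G.step x z *
              ∑ k ∈ Finset.range (n + 1), G.firstHitProb z y k * G.hp (n - k) y y :=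
            finsum_congr fun z => by rw [ih z]
        _ = ∑ᶠ z, ∑ k ∈ Finset.range (n + 1),
              G.step x z * (G.firstHitProb z y k * G.hp (n - k) y y) :=
            finsum_congr fun z => Finset.mul_sum _ _ _
        _ = ∑ k ∈ Finset.range (n + 1), ∑ᶠ z,
              G.step x z * (G.firstHitProb z y k * G.hp (n - k) y y) :=
            finsum_sum_comm _ _ fun k _ => hsupp k
        _ = ∑ k ∈ Finset.range (n + 1),
              (∑ᶠ z, G.step x z * G.firstHitProb z y k) * G.hp (n - k) y y := by
            refine Finset.sum_congr rfl fun k _ => ?_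
            rw [finsum_mul _ _]
            exact finsum_congr fun z => (mul_assoc _ _ _).symm
        _ = ∑ k ∈ Finset.range (n + 1),
              G.firstHitProb x y (k + 1) * G.hp (n - k) y y := by
            refine Finset.sum_congr rfl fun k _ => ?_
            rw [G.fh_succ k hxy]
        _ = ∑ k ∈ Finset.range (n + 1 + 1),
              G.firstHitProb x y k * G.hp (n + 1 - k) y y := by
            conv_rhs => rw [Finset.sum_range_succ']
            rw [G.fh_zero, if_neg hxy, zero_mul, add_zero]
            refine Finset.sum_congr rfl fun k _ => ?_
            have hnk : n + 1 - (k + 1) = n - k := by omega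
            rw [hnk]

end WGraph

/-- In a locally finite vertex-transitive weighted graph,
`P_x[T_y = n] = P_y[T_x = n]` for every `n`; in particular
`P_x[T_y < ∞] = P_y[T_x < ∞]`. -/
theorem firstHitProb_symm {V : Type*} (G : WGraph V)
    (htrans : G.VertexTransitive) (x y : V) :
    (∀ n : ℕ, G.firstHitProb x y n = G.firstHitProb y x n) ∧
      G.hitProb x y = G.hitProb y x := by
  classical
  have hd : ∀ a b : V, G.deg a = G.deg b := by
    intro a b
    obtain ⟨g, hg, hga⟩ := htrans a b
    rw [← hga, G.deg_aut hg]
  have hdiag : ∀ m : ℕ, G.hp m y y = G.hp m x x := by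
    intro m
    obtain ⟨g, hg, hgx⟩ := htrans x y
    rw [← hgx, G.hp_aut hg]
  have main : ∀ n : ℕ, G.firstHitProb x y n = G.firstHitProb y x n := by
    intro n
    induction n using Nat.strong_induction_on with
    | _ n ih =>
      have h1 := G.conv y n x
      have h2 := G.conv x n y
      have h3 : G.hp n x y = G.hp n y x := G.hp_symm hd n x y
      rw [Finset.sum_range_succ] at h1 h2
      rw [Nat.sub_self, G.hp_zero, if_pos rfl, mul_one] at h1 h2
      have h4 : ∑ k ∈ Finset.range n, G.firstHitProb x y k * G.hp (n - k) y y
          = ∑ k ∈ Finset.range n, G.firstHitProb y x k * G.hp (n - k) x x := by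
        refine Finset.sum_congr rfl fun k hk => ?_
        rw [ih k (Finset.mem_range.mp hk), hdiag]
      rw [h1, h2, h4] at h3
      exact add_left_cancel h3
  exact ⟨main, tsum_congr main⟩
end
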